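/- The Kullback-Leibler divergence from the wrapped Cauchy distribution with concentration ρ ∈ [0,1) to the circular uniform distribution (ρ₀ = 0, same location) equals −log(1 − ρ²). -/

import Mathlib

open Real MeasureTheory

/-- Wrapped Cauchy density. -/
noncomputable def wcDensity (μ ρ x : ℝ) : ℝ :=
  (1 / (2 * Real.pi)) * ((1 - ρ^2) / (1 + ρ^2 - 2 * ρ * Real.cos (x - μ)))

namespace WCKLD

lemma D_pos {r : ℝ} (h : |r| < 1) (θ : ℝ) : 0 < 1 + r^2 - 2*r*Real.cos θ := by
  have h1 : r * Real.cos θ ≤ |r| := by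
    calc r * Real.cos θ ≤ |r * Real.cos θ| := le_abs_self _
      _ = |r| * |Real.cos θ| := abs_mul _ _
      _ ≤ |r| * 1 := by gcongr; exact Real.abs_cos_le_one θ
      _ = |r| := mul_one _
  have h2 : 0 < 1 - |r| := by linarith
  nlinarith [sq_abs r, mul_pos h2 h2]

lemma norm_w_lt {r : ℝ} (h : |r| < 1) (θ : ℝ) :
    ‖(r : ℂ) * Complex.exp (θ * Complex.I)‖ < 1 := by
  rw [norm_mul, Complex.norm_real, Complex.norm_exp_ofReal_mul_I, mul_one, Real.norm_eq_abs]
  exact h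

lemma re_w_pow {r : ℝ} (θ : ℝ) (k : ℕ) :
    (((r : ℂ) * Complex.exp (θ * Complex.I)) ^ k).re = r ^ k * Real.cos (k * θ) := by
  rw [mul_pow, ← Complex.ofReal_pow, ← Complex.exp_nat_mul,
    show ((k : ℂ)) * ((θ : ℂ) * Complex.I) = (((k : ℝ) * θ : ℝ) : ℂ) * Complex.I by
      push_cast; ring,
    Complex.re_ofReal_mul, Complex.exp_ofReal_mul_I_re]

lemma normSq_one_sub_w {r : ℝ} (θ : ℝ) :
    Complex.normSq (1 - (r : ℂ) * Complex.exp (θ * Complex.I))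
      = 1 + r^2 - 2*r*Real.cos θ := by
  have hre : ((r : ℂ) * Complex.exp (θ * Complex.I)).re = r * Real.cos θ := by
    rw [Complex.re_ofReal_mul, Complex.exp_ofReal_mul_I_re]
  have him : ((r : ℂ) * Complex.exp (θ * Complex.I)).im = r * Real.sin θ := by
    rw [Complex.im_ofReal_mul, Complex.exp_ofReal_mul_I_im]
  rw [Complex.normSq_apply]
  simp only [Complex.sub_re, Complex.sub_im, Complex.one_re, Complex.one_im, hre, him]
  have := Real.sin_sq_add_cos_sq θ
  nlinarith [this]

lemma hasSum_geom_cos {r : ℝ} (h : |r| < 1) (θ : ℝ) :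
    HasSum (fun n : ℕ => 2*r^(n+1)*Real.cos ((n+1)*θ))
      ((1-r^2)/(1 + r^2 - 2*r*Real.cos θ) - 1) := by
  set w : ℂ := (r : ℂ) * Complex.exp (θ * Complex.I) with hw
  have hnorm : ‖w‖ < 1 := norm_w_lt h θ
  have hgeom := hasSum_geometric_of_norm_lt_one hnorm
  have h2 := (hgeom.mul_left w).mapL Complex.reCLM
  have h3 := h2.mul_left 2
  have hD := D_pos h θ
  have heq : (fun n : ℕ => 2 * Complex.reCLM (w * w ^ n))
      = fun n : ℕ => 2*r^(n+1)*Real.cos ((n+1)*θ) := by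
    funext n
    have : w * w ^ n = w ^ (n+1) := (pow_succ' w n).symm
    rw [this]
    simp only [Complex.reCLM_apply]
    rw [re_w_pow θ (n+1)]
    push_cast
    ring
  rw [heq] at h3
  have hval : 2 * Complex.reCLM (w * (1 - w)⁻¹)
      = (1-r^2)/(1 + r^2 - 2*r*Real.cos θ) - 1 := by
    simp only [Complex.reCLM_apply]
    rw [← div_eq_mul_inv, Complex.div_re, normSq_one_sub_w]
    have hre : w.re = r * Real.cos θ := by
      rw [hw, Complex.re_ofReal_mul, Complex.exp_ofReal_mul_I_re]
    have him : w.im = r * Real.sin θ := by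
      rw [hw, Complex.im_ofReal_mul, Complex.exp_ofReal_mul_I_im]
    simp only [Complex.sub_re, Complex.sub_im, Complex.one_re, Complex.one_im, hre, him]
    have hsc := Real.sin_sq_add_cos_sq θ
    field_simp
    nlinarith [hD, hsc]
  rw [hval] at h3
  exact h3

lemma hasSum_log_cos {r : ℝ} (h : |r| < 1) (θ : ℝ) :
    HasSum (fun n : ℕ => -(2*r^(n+1)/(n+1))*Real.cos ((n+1)*θ))
      (Real.log (1 + r^2 - 2*r*Real.cos θ)) := by
  set w : ℂ := (r : ℂ) * Complex.exp (θ * Complex.I) with hw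
  have hnorm : ‖w‖ < 1 := norm_w_lt h θ
  have hlog := Complex.hasSum_taylorSeries_neg_log hnorm
  have h0 := (hasSum_nat_add_iff (f := fun n : ℕ => w ^ n / (n:ℂ))
      (g := -Complex.log (1 - w)) 1).mpr (by simpa using hlog)
  have hshift : HasSum (fun n : ℕ => w^(n+1)/((n:ℂ)+1)) (-Complex.log (1-w)) := by
    have hcast : (fun n : ℕ => w ^ (n+1) / (((n+1 : ℕ)):ℂ))
        = fun n : ℕ => w^(n+1)/((n:ℂ)+1) := by funext n; push_cast; ring
    rw [← hcast]
    exact h0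
  have h2 := (hshift.mapL Complex.reCLM).mul_left (-2)
  have hD := D_pos h θ
  have heq : (fun n : ℕ => -2 * Complex.reCLM (w^(n+1)/((n:ℂ)+1)))
      = fun n : ℕ => -(2*r^(n+1)/(n+1))*Real.cos ((n+1)*θ) := by
    funext n
    simp only [Complex.reCLM_apply]
    rw [show ((n:ℂ)+1) = (((n:ℝ)+1 : ℝ) : ℂ) by push_cast; ring, Complex.div_ofReal_re,
      re_w_pow θ (n+1)]
    push_cast
    ring
  rw [heq] at h2
  have hne : (1 : ℂ) - w ≠ 0 := by
    intro hcontra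
    have : ‖(1:ℂ) - w‖ = 0 := by rw [hcontra, norm_zero]
    have h1 : (1:ℝ) ≤ ‖(1:ℂ)-w‖ + ‖w‖ := by
      calc (1:ℝ) = ‖(1:ℂ)‖ := by simp
        _ = ‖(1 - w) + w‖ := by ring_nf
        _ ≤ ‖(1:ℂ)-w‖ + ‖w‖ := norm_add_le _ _
    linarith
  have hval : -2 * Complex.reCLM (-Complex.log (1-w))
      = Real.log (1 + r^2 - 2*r*Real.cos θ) := by
    simp only [Complex.reCLM_apply, Complex.neg_re, Complex.log_re]
    have habs : ‖1-w‖^2 = 1 + r^2 - 2*r*Real.cos θ := by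
      rw [Complex.sq_norm, normSq_one_sub_w]
    rw [← habs, Real.log_pow]
    push_cast
    ring
  rw [hval] at h2
  exact h2

lemma log_series {r : ℝ} (h0 : 0 ≤ r) (h1 : r < 1) :
    HasSum (fun n : ℕ => r^(n+1)/(n+1)) (-Real.log (1-r)) := by
  have habs : |r| < 1 := by rw [abs_of_nonneg h0]; exact h1
  have := hasSum_log_cos habs 0
  simp only [mul_zero, Real.cos_zero, mul_one] at this
  rw [show (1 : ℝ) + r^2 - 2*r = (1-r)^2 by ring] at this
  rw [show Real.log ((1-r)^2) = 2 * Real.log (1-r) from by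
    rw [Real.log_pow]; norm_num] at this
  have h3 := this.mul_left (-(1/2))
  have heq : (fun n : ℕ => (-(1/2) : ℝ) * (-(2*r^(n+1)/((n:ℝ)+1))))
      = fun n : ℕ => r^(n+1)/((n:ℝ)+1) := by funext n; ring
  rw [heq, show (-(1/2):ℝ)*(2*Real.log (1-r)) = -Real.log (1-r) by ring] at h3
  exact h3


lemma intCosZ (k : ℤ) (hk : k ≠ 0) :
    ∫ x in (0:ℝ)..(2*π), Real.cos (k*x) = 0 := by
  have hk' : (k:ℝ) ≠ 0 := Int.cast_ne_zero.mpr hk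
  rw [intervalIntegral.integral_comp_mul_left (f := Real.cos) hk', integral_cos]
  rw [mul_zero, Real.sin_zero, show (k:ℝ)*(2*π) = ((2*k : ℤ):ℝ)*π by push_cast; ring,
    Real.sin_int_mul_pi]
  simp

lemma intCos (n : ℕ) : ∫ x in (0:ℝ)..(2*π), Real.cos (((n:ℝ)+1)*x) = 0 := by
  have h := intCosZ ((n:ℤ)+1) (by omega)
  have h2 : ∀ x:ℝ, ((((n:ℤ)+1 : ℤ)):ℝ)*x = ((n:ℝ)+1)*x := by intro x; push_cast; ring
  simpa only [h2] using h

lemma cos_mul_intervalIntegrable (c a b : ℝ) :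
    IntervalIntegrable (fun x => Real.cos (c*x)) volume a b :=
  (Real.continuous_cos.comp (continuous_const.mul continuous_id)).intervalIntegrable a b

lemma orth (m n : ℕ) :
    ∫ x in (0:ℝ)..(2*π), Real.cos (((m:ℝ)+1)*x) * Real.cos (((n:ℝ)+1)*x)
      = if m = n then π else 0 := by
  have hpt : ∀ x:ℝ, Real.cos (((m:ℝ)+1)*x) * Real.cos (((n:ℝ)+1)*x)
      = (Real.cos (((((m:ℤ)+(n:ℤ)+2 : ℤ)):ℝ)*x) + Real.cos (((((m:ℤ)-(n:ℤ) : ℤ)):ℝ)*x))/2 := by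
    intro x
    rw [show ((((m:ℤ)+(n:ℤ)+2 : ℤ)):ℝ)*x = ((m:ℝ)+1)*x + ((n:ℝ)+1)*x by push_cast; ring,
      show ((((m:ℤ)-(n:ℤ) : ℤ)):ℝ)*x = ((m:ℝ)+1)*x - ((n:ℝ)+1)*x by push_cast; ring,
      Real.cos_add, Real.cos_sub]
    ring
  simp only [hpt]
  rw [intervalIntegral.integral_div,
    intervalIntegral.integral_add (cos_mul_intervalIntegrable _ _ _)
      (cos_mul_intervalIntegrable _ _ _),
    intCosZ ((m:ℤ)+(n:ℤ)+2) (by omega)]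
  by_cases hmn : m = n
  · subst hmn
    simp only [sub_self, Int.cast_zero, zero_mul, Real.cos_zero, if_pos]
    rw [intervalIntegral.integral_const]
    simp
  · rw [intCosZ ((m:ℤ)-(n:ℤ)) (by omega), if_neg hmn]
    norm_num

lemma hasSum_intervalIntegral {F : ℕ → ℝ → ℝ} {S : ℝ → ℝ} {c : ℕ → ℝ}
    (hFc : ∀ n, Continuous (F n)) (hS : ∀ x, HasSum (fun n => F n x) (S x))
    (hb : ∀ n x, |F n x| ≤ c n) (hc : Summable c) :
    HasSum (fun n => ∫ x in (0:ℝ)..(2*π), F n x) (∫ x in (0:ℝ)..(2*π), S x) := by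
  have h2π : (0:ℝ) ≤ 2*π := by positivity
  have hint : ∀ n, IntegrableOn (F n) (Set.Ioc 0 (2*π)) volume :=
    fun n => (hFc n).integrableOn_Ioc
  have hmeas : (volume (Set.Ioc (0:ℝ) (2*π))).toReal = 2*π := by
    rw [Real.volume_Ioc, sub_zero, ENNReal.toReal_ofReal (by positivity)]
  have hsum : Summable (fun n => ∫ x in Set.Ioc (0:ℝ) (2*π), ‖F n x‖) := by
    apply Summable.of_nonneg_of_le (fun n => integral_nonneg fun x => norm_nonneg _)
      (fun n => ?_) (hc.mul_left (2*π))
    calc ∫ x in Set.Ioc (0:ℝ) (2*π), ‖F n x‖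
        ≤ ∫ _x in Set.Ioc (0:ℝ) (2*π), c n := by
          refine setIntegral_mono_on (hint n).norm ((integrableOn_const_iff (C := c n) (by finiteness)).mpr ?_)
            measurableSet_Ioc (fun x _ => ?_)
          · right; rw [Real.volume_Ioc]; exact ENNReal.ofReal_lt_top
          · rw [Real.norm_eq_abs]; exact hb n x
      _ = (2*π) * c n := by rw [setIntegral_const, measureReal_def, hmeas, smul_eq_mul]
  have hmain := MeasureTheory.hasSum_integral_of_summable_integral_norm
    (μ := volume.restrict (Set.Ioc (0:ℝ) (2*π))) hint hsum
  have htsum : ∀ x:ℝ, ∑' n, F n x = S x := fun x => (hS x).tsum_eq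
  simp only [intervalIntegral.integral_of_le h2π, htsum] at hmain ⊢
  exact hmain


lemma geomSummable {r : ℝ} (h0 : 0 ≤ r) (h1 : r < 1) :
    Summable (fun n : ℕ => 2*r^(n+1)) := by
  have h := (summable_geometric_of_lt_one h0 h1).mul_left (2*r)
  have heq : (fun n : ℕ => 2*r*r^n) = fun n : ℕ => 2*r^(n+1) := by
    funext n; ring
  rwa [heq] at h

lemma cos_bound {r : ℝ} (h0 : 0 ≤ r) (n : ℕ) (y : ℝ) :
    |2*r^(n+1)/((n:ℝ)+1)*Real.cos y| ≤ 2*r^(n+1) := by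
  have hpow : (0:ℝ) ≤ r^(n+1) := pow_nonneg h0 _
  have hn1 : (1:ℝ) ≤ (n:ℝ)+1 := by
    have := Nat.cast_nonneg (α := ℝ) n; linarith
  have hnn : (0:ℝ) ≤ 2*r^(n+1)/((n:ℝ)+1) := by positivity
  calc |2*r^(n+1)/((n:ℝ)+1)*Real.cos y|
      = (2*r^(n+1)/((n:ℝ)+1)) * |Real.cos y| := by rw [abs_mul, abs_of_nonneg hnn]
    _ ≤ (2*r^(n+1)/((n:ℝ)+1)) * 1 := by gcongr; exact Real.abs_cos_le_one y
    _ = 2*r^(n+1)/((n:ℝ)+1) := mul_one _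
    _ ≤ 2*r^(n+1) := div_le_self (by linarith) hn1

lemma Dcont (r : ℝ) : Continuous fun x:ℝ => 1 + r^2 - 2*r*Real.cos x := by
  continuity

lemma intPoissonSub {r : ℝ} (h0 : 0 ≤ r) (h1 : r < 1) :
    ∫ x in (0:ℝ)..(2*π), ((1-r^2)/(1 + r^2 - 2*r*Real.cos x) - 1) = 0 := by
  have habs : |r| < 1 := by rwa [abs_of_nonneg h0]
  have hHS := hasSum_intervalIntegral
    (F := fun n x => 2*r^(n+1)*Real.cos (((n:ℝ)+1)*x))
    (S := fun x => (1-r^2)/(1 + r^2 - 2*r*Real.cos x) - 1)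
    (c := fun n => 2*r^(n+1))
    (fun n => by continuity)
    (fun x => hasSum_geom_cos habs x)
    (fun n x => by
      have := cos_bound h0 n (((n:ℝ)+1)*x)
      have hn1 : (1:ℝ) ≤ (n:ℝ)+1 := by
        have := Nat.cast_nonneg (α := ℝ) n; linarith
      have hpow : (0:ℝ) ≤ r^(n+1) := pow_nonneg h0 _
      calc |2*r^(n+1)*Real.cos (((n:ℝ)+1)*x)|
          = (2*r^(n+1)) * |Real.cos (((n:ℝ)+1)*x)| := by
            rw [abs_mul, abs_of_nonneg (by linarith)]
        _ ≤ (2*r^(n+1)) * 1 := by gcongr; exact Real.abs_cos_le_one _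
        _ = 2*r^(n+1) := mul_one _)
    (geomSummable h0 h1)
  have hzero : (fun n : ℕ => ∫ x in (0:ℝ)..(2*π), 2*r^(n+1)*Real.cos (((n:ℝ)+1)*x))
      = fun _ : ℕ => (0:ℝ) := by
    funext n
    rw [intervalIntegral.integral_const_mul, intCos n, mul_zero]
  rw [hzero] at hHS
  exact (hasSum_zero.unique hHS).symm

lemma intPoisson {r : ℝ} (h0 : 0 ≤ r) (h1 : r < 1) :
    ∫ x in (0:ℝ)..(2*π), (1-r^2)/(1 + r^2 - 2*r*Real.cos x) = 2*π := by
  have habs : |r| < 1 := by rwa [abs_of_nonneg h0]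
  have hgc : Continuous fun x:ℝ => (1-r^2)/(1 + r^2 - 2*r*Real.cos x) :=
    continuous_const.div (Dcont r) (fun x => (D_pos habs x).ne')
  have hS0 := intPoissonSub h0 h1
  rw [intervalIntegral.integral_sub (hgc.intervalIntegrable _ _)
    (intervalIntegrable_const (c := (1:ℝ))), intervalIntegral.integral_const] at hS0
  simp only [smul_eq_mul, mul_one, sub_zero] at hS0
  linarith

lemma intLogD {r : ℝ} (h0 : 0 ≤ r) (h1 : r < 1) :
    ∫ x in (0:ℝ)..(2*π), Real.log (1 + r^2 - 2*r*Real.cos x) = 0 := by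
  have habs : |r| < 1 := by rwa [abs_of_nonneg h0]
  have hHS := hasSum_intervalIntegral
    (F := fun n x => -(2*r^(n+1)/((n:ℝ)+1))*Real.cos (((n:ℝ)+1)*x))
    (S := fun x => Real.log (1 + r^2 - 2*r*Real.cos x))
    (c := fun n => 2*r^(n+1))
    (fun n => by continuity)
    (fun x => hasSum_log_cos habs x)
    (fun n x => by
      have := cos_bound h0 n (((n:ℝ)+1)*x)
      calc |-(2*r^(n+1)/((n:ℝ)+1))*Real.cos (((n:ℝ)+1)*x)|
          = |2*r^(n+1)/((n:ℝ)+1)*Real.cos (((n:ℝ)+1)*x)| := by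
            rw [neg_mul, abs_neg]
        _ ≤ 2*r^(n+1) := this)
    (geomSummable h0 h1)
  have hzero : (fun n : ℕ => ∫ x in (0:ℝ)..(2*π), -(2*r^(n+1)/((n:ℝ)+1))*Real.cos (((n:ℝ)+1)*x))
      = fun _ : ℕ => (0:ℝ) := by
    funext n
    rw [intervalIntegral.integral_const_mul, intCos n, mul_zero]
  rw [hzero] at hHS
  exact (hasSum_zero.unique hHS).symm

lemma intCosLogD {r : ℝ} (h0 : 0 ≤ r) (h1 : r < 1) (m : ℕ) :
    ∫ x in (0:ℝ)..(2*π), Real.cos (((m:ℝ)+1)*x) * Real.log (1 + r^2 - 2*r*Real.cos x)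
      = -(2*π*r^(m+1)/((m:ℝ)+1)) := by
  have habs : |r| < 1 := by rwa [abs_of_nonneg h0]
  have hHS := hasSum_intervalIntegral
    (F := fun n x => Real.cos (((m:ℝ)+1)*x) * (-(2*r^(n+1)/((n:ℝ)+1))*Real.cos (((n:ℝ)+1)*x)))
    (S := fun x => Real.cos (((m:ℝ)+1)*x) * Real.log (1 + r^2 - 2*r*Real.cos x))
    (c := fun n => 2*r^(n+1))
    (fun n => by continuity)
    (fun x => (hasSum_log_cos habs x).mul_left _)
    (fun n x => by
      have hb := cos_bound h0 n (((n:ℝ)+1)*x)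
      calc |Real.cos (((m:ℝ)+1)*x) * (-(2*r^(n+1)/((n:ℝ)+1))*Real.cos (((n:ℝ)+1)*x))|
          = |Real.cos (((m:ℝ)+1)*x)| * |2*r^(n+1)/((n:ℝ)+1)*Real.cos (((n:ℝ)+1)*x)| := by
            rw [abs_mul, neg_mul, abs_neg]
        _ ≤ 1 * (2*r^(n+1)) :=
            mul_le_mul (Real.abs_cos_le_one _) hb (abs_nonneg _) zero_le_one
        _ = 2*r^(n+1) := one_mul _)
    (geomSummable h0 h1)
  have hITE : (fun n : ℕ => ∫ x in (0:ℝ)..(2*π),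
        Real.cos (((m:ℝ)+1)*x) * (-(2*r^(n+1)/((n:ℝ)+1))*Real.cos (((n:ℝ)+1)*x)))
      = fun n : ℕ => if n = m then -(2*π*r^(m+1)/((m:ℝ)+1)) else 0 := by
    funext n
    rw [show (fun x => Real.cos (((m:ℝ)+1)*x) * (-(2*r^(n+1)/((n:ℝ)+1))*Real.cos (((n:ℝ)+1)*x)))
        = fun x => (-(2*r^(n+1)/((n:ℝ)+1))) * (Real.cos (((m:ℝ)+1)*x)*Real.cos (((n:ℝ)+1)*x))
      from funext fun x => by ring]
    rw [intervalIntegral.integral_const_mul, orth m n]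
    by_cases h : n = m
    · subst h
      rw [if_pos rfl, if_pos rfl]
      ring
    · rw [if_neg (fun hh => h hh.symm), if_neg h, mul_zero]
  rw [hITE] at hHS
  exact hHS.unique (hasSum_ite_eq m _)

lemma intGLogD {r : ℝ} (h0 : 0 ≤ r) (h1 : r < 1) :
    ∫ x in (0:ℝ)..(2*π),
        ((1-r^2)/(1 + r^2 - 2*r*Real.cos x)) * Real.log (1 + r^2 - 2*r*Real.cos x)
      = 4*π*Real.log (1-r^2) := by
  have habs : |r| < 1 := by rwa [abs_of_nonneg h0]
  have hr1 : (0:ℝ) < 1 - r := by linarith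
  set C : ℝ := -(2*Real.log (1-r)) with hC
  have hlognp : Real.log (1-r) ≤ 0 := Real.log_nonpos (by linarith) (by linarith)
  have hCnn : 0 ≤ C := by rw [hC]; linarith
  have hlogb : ∀ x:ℝ, |Real.log (1 + r^2 - 2*r*Real.cos x)| ≤ C := by
    intro x
    have hD := D_pos habs x
    have hcos1 := Real.cos_le_one x
    have hcosm1 := Real.neg_one_le_cos x
    have hlow : (1-r)^2 ≤ 1 + r^2 - 2*r*Real.cos x := by nlinarith
    have hhigh : 1 + r^2 - 2*r*Real.cos x ≤ (1+r)^2 := by nlinarith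
    have hlog_low : 2*Real.log (1-r) ≤ Real.log (1 + r^2 - 2*r*Real.cos x) := by
      rw [show 2*Real.log (1-r) = Real.log ((1-r)^2) by rw [Real.log_pow]; norm_num]
      exact Real.log_le_log (by positivity) hlow
    have hlog_high : Real.log (1 + r^2 - 2*r*Real.cos x) ≤ 2*Real.log (1+r) := by
      rw [show 2*Real.log (1+r) = Real.log ((1+r)^2) by rw [Real.log_pow]; norm_num]
      exact Real.log_le_log hD hhigh
    have hkey : Real.log (1+r) ≤ -Real.log (1-r) := by
      have hmul : Real.log (1+r) + Real.log (1-r) = Real.log ((1+r)*(1-r)) :=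
        (Real.log_mul (by linarith) (by linarith)).symm
      have hle : Real.log ((1+r)*(1-r)) ≤ 0 := Real.log_nonpos (by nlinarith) (by nlinarith)
      linarith
    rw [abs_le, hC]
    constructor <;> linarith
  have hsummableC : Summable (fun n : ℕ => 2*r^(n+1)*C) := (geomSummable h0 h1).mul_right C
  have hHS := hasSum_intervalIntegral
    (F := fun n x => (2*r^(n+1)*Real.cos (((n:ℝ)+1)*x)) * Real.log (1 + r^2 - 2*r*Real.cos x))
    (S := fun x => ((1-r^2)/(1 + r^2 - 2*r*Real.cos x) - 1) * Real.log (1 + r^2 - 2*r*Real.cos x))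
    (c := fun n => 2*r^(n+1)*C)
    (fun n => by
      have := (Dcont r).log (fun x => (D_pos habs x).ne')
      continuity)
    (fun x => (hasSum_geom_cos habs x).mul_right _)
    (fun n x => by
      have hpow : (0:ℝ) ≤ r^(n+1) := pow_nonneg h0 _
      calc |(2*r^(n+1)*Real.cos (((n:ℝ)+1)*x)) * Real.log (1 + r^2 - 2*r*Real.cos x)|
          = |2*r^(n+1)*Real.cos (((n:ℝ)+1)*x)| * |Real.log (1 + r^2 - 2*r*Real.cos x)| :=
            abs_mul _ _
        _ ≤ (2*r^(n+1)) * C := by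
            apply mul_le_mul _ (hlogb x) (abs_nonneg _) (by linarith)
            calc |2*r^(n+1)*Real.cos (((n:ℝ)+1)*x)|
                = (2*r^(n+1)) * |Real.cos (((n:ℝ)+1)*x)| := by
                  rw [abs_mul, abs_of_nonneg (by linarith)]
              _ ≤ (2*r^(n+1)) * 1 := by gcongr; exact Real.abs_cos_le_one _
              _ = 2*r^(n+1) := mul_one _)
    hsummableC
  have hITE : (fun n : ℕ => ∫ x in (0:ℝ)..(2*π),
        (2*r^(n+1)*Real.cos (((n:ℝ)+1)*x)) * Real.log (1 + r^2 - 2*r*Real.cos x))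
      = fun n : ℕ => (-(4*π)) * ((r^2)^(n+1)/((n:ℝ)+1)) := by
    funext n
    rw [show (fun x => (2*r^(n+1)*Real.cos (((n:ℝ)+1)*x)) * Real.log (1 + r^2 - 2*r*Real.cos x))
        = fun x => (2*r^(n+1)) * (Real.cos (((n:ℝ)+1)*x) * Real.log (1 + r^2 - 2*r*Real.cos x))
      from funext fun x => by ring]
    rw [intervalIntegral.integral_const_mul, intCosLogD h0 h1 n]
    have hp : (r^2)^(n+1) = r^(n+1)*r^(n+1) := by
      rw [← pow_mul, two_mul, pow_add]
    rw [hp]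
    ring
  rw [hITE] at hHS
  have hr2 : r^2 < 1 := by nlinarith
  have hls := (log_series (by positivity) hr2).mul_left (-(4*π))
  have hval := hHS.unique hls
  have hlogc : Continuous fun x:ℝ => Real.log (1 + r^2 - 2*r*Real.cos x) :=
    (Dcont r).log (fun x => (D_pos habs x).ne')
  have hgc : Continuous fun x:ℝ => (1-r^2)/(1 + r^2 - 2*r*Real.cos x) :=
    continuous_const.div (Dcont r) (fun x => (D_pos habs x).ne')
  have hsplit : (fun x:ℝ => ((1-r^2)/(1 + r^2 - 2*r*Real.cos x)) * Real.log (1 + r^2 - 2*r*Real.cos x))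
      = fun x:ℝ => Real.log (1 + r^2 - 2*r*Real.cos x)
          + ((1-r^2)/(1 + r^2 - 2*r*Real.cos x) - 1) * Real.log (1 + r^2 - 2*r*Real.cos x) :=
    funext fun x => by ring
  rw [hsplit, intervalIntegral.integral_add (f := fun x => Real.log (1 + r^2 - 2*r*Real.cos x))
    (g := fun x => ((1-r^2)/(1 + r^2 - 2*r*Real.cos x) - 1) * Real.log (1 + r^2 - 2*r*Real.cos x)) (hlogc.intervalIntegrable _ _)
    (((hgc.sub continuous_const).mul hlogc).intervalIntegrable _ _),
    intLogD h0 h1, hval]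
  ring

end WCKLD


theorem wrappedCauchy_KLD_uniform (μ ρ : ℝ) (h0 : 0 ≤ ρ) (h1 : ρ < 1) :
    ∫ x in (0:ℝ)..(2 * Real.pi),
        wcDensity μ ρ x * Real.log (wcDensity μ ρ x / (1 / (2 * Real.pi)))
      = -Real.log (1 - ρ^2) := by
  have habs : |ρ| < 1 := by rwa [abs_of_nonneg h0]
  have hπ : (0:ℝ) < π := Real.pi_pos
  have h2π : (1:ℝ)/(2*π) ≠ 0 := by positivity
  have hρ2 : (0:ℝ) < 1 - ρ^2 := by nlinarith
  set G : ℝ → ℝ := fun y => (1-ρ^2)/(1 + ρ^2 - 2*ρ*Real.cos y)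
      * Real.log ((1-ρ^2)/(1 + ρ^2 - 2*ρ*Real.cos y)) with hG
  have hstep : ∀ x:ℝ, wcDensity μ ρ x * Real.log (wcDensity μ ρ x / (1/(2*Real.pi)))
      = (1/(2*π)) * G (x - μ) := by
    intro x
    rw [wcDensity, hG]
    rw [mul_div_cancel_left₀ _ h2π]
    simp only []
    ring
  simp only [hstep]
  rw [intervalIntegral.integral_const_mul]
  rw [intervalIntegral.integral_comp_sub_right (f := G) μ]
  have hper : Function.Periodic G (2*π) := by
    intro y
    simp only [hG]
    rw [Real.cos_add_two_pi]
  have hshift : ∫ x in (0:ℝ)-μ..(2*π-μ), G x = ∫ x in (0:ℝ)..(2*π), G x := by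
    have h := hper.intervalIntegral_add_eq ((0:ℝ)-μ) 0
    rw [zero_add] at h
    rw [show (2*π - μ) = (0:ℝ)-μ + 2*π by ring]
    exact h
  rw [hshift]
  have hGx : ∀ x:ℝ, G x = Real.log (1-ρ^2) * ((1-ρ^2)/(1 + ρ^2 - 2*ρ*Real.cos x))
      - ((1-ρ^2)/(1 + ρ^2 - 2*ρ*Real.cos x)) * Real.log (1 + ρ^2 - 2*ρ*Real.cos x) := by
    intro x
    have hD := WCKLD.D_pos habs x
    rw [hG]
    simp only []
    rw [Real.log_div hρ2.ne' hD.ne']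
    ring
  simp only [hGx]
  have hgc : Continuous fun x:ℝ => (1-ρ^2)/(1 + ρ^2 - 2*ρ*Real.cos x) :=
    continuous_const.div (WCKLD.Dcont ρ) (fun x => (WCKLD.D_pos habs x).ne')
  have hlogc : Continuous fun x:ℝ => Real.log (1 + ρ^2 - 2*ρ*Real.cos x) :=
    (WCKLD.Dcont ρ).log (fun x => (WCKLD.D_pos habs x).ne')
  rw [intervalIntegral.integral_sub (f := fun x => Real.log (1-ρ^2) * ((1-ρ^2)/(1 + ρ^2 - 2*ρ*Real.cos x)))
    (g := fun x => (1-ρ^2)/(1 + ρ^2 - 2*ρ*Real.cos x) * Real.log (1 + ρ^2 - 2*ρ*Real.cos x)) ((continuous_const.mul hgc).intervalIntegrable _ _)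
    ((hgc.mul hlogc).intervalIntegrable _ _),
    intervalIntegral.integral_const_mul, WCKLD.intPoisson h0 h1, WCKLD.intGLogD h0 h1]
  field_simp
  ring
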